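/- Let d ≥ 1 and let ℓ_{d−1} = arccos(−1/d) be the geodesic arclength between two vertices of the regular d-dimensional simplex inscribed in S^{d−1}. Then for every α with 0 < α ≤ ℓ_{d−1}, every ε with 0 < ε < α, and every finite (ε/4)-net X of S^d, the chromatic number of the ε-distance graph D_{X,ε}(α) is at least d+2. -/

import Mathlib

open scoped RealInnerProductSpace

/-- Geodesic distance `arccos ⟨x, y⟩` on the unit sphere in `ℝ^n`. -/
noncomputable def gd {n : ℕ} (x y : EuclideanSpace ℝ (Fin n)) : ℝ :=
  Real.arccos (inner ℝ x y : ℝ)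

lemma gd_comm {n : ℕ} (x y : EuclideanSpace ℝ (Fin n)) : gd x y = gd y x := by
  rw [gd, gd, real_inner_comm]

/-- The unit sphere `S^d ⊆ ℝ^{d+1}`. -/
noncomputable def unitSphere (d : ℕ) : Set (EuclideanSpace ℝ (Fin (d + 1))) :=
  Metric.sphere 0 1

/-- `X` is an `r`-net of `S^d`: every point of the sphere is within geodesic
distance `r` of a point of `X`. -/
def IsNet (d : ℕ) (r : ℝ) (X : Set (EuclideanSpace ℝ (Fin (d + 1)))) : Prop :=
  ∀ y ∈ unitSphere d, ∃ x ∈ X, gd x y ≤ r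

/-- The ε-distance graph with parameter α on a set `X ⊆ ℝ^n`: distinct points are
adjacent iff their geodesic distance lies in `[α - ε, α + ε]`. -/
noncomputable def distGraph {n : ℕ} (X : Set (EuclideanSpace ℝ (Fin n))) (α ε : ℝ) :
    SimpleGraph X where
  Adj x y := x ≠ y ∧ α - ε ≤ gd x.1 y.1 ∧ gd x.1 y.1 ≤ α + ε
  symm := by
    refine ⟨fun x y h => ?_⟩
    exact ⟨h.1.symm, by rw [gd_comm]; exact h.2.1, by rw [gd_comm]; exact h.2.2⟩
  loopless := ⟨fun x h => h.1 rfl⟩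


section Basics

variable {n : ℕ}

open Real

lemma unit_of_mem_sphere {d : ℕ} {x : EuclideanSpace ℝ (Fin (d+1))}
    (hx : x ∈ unitSphere d) : ‖x‖ = 1 := by
  simpa [unitSphere] using hx

lemma inner_le_one {x y : EuclideanSpace ℝ (Fin n)} (hx : ‖x‖ = 1) (hy : ‖y‖ = 1) :
    (inner ℝ x y : ℝ) ≤ 1 := by
  have := real_inner_le_norm x y
  rw [hx, hy] at this; linarith

lemma neg_one_le_inner {x y : EuclideanSpace ℝ (Fin n)} (hx : ‖x‖ = 1) (hy : ‖y‖ = 1) :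
    (-1 : ℝ) ≤ inner ℝ x y := by
  have := abs_real_inner_le_norm x y
  rw [hx, hy] at this
  have := abs_le.mp (by linarith [this] : |(inner ℝ x y : ℝ)| ≤ 1)
  linarith [this.1]

lemma gd_nonneg (x y : EuclideanSpace ℝ (Fin n)) : 0 ≤ gd x y := Real.arccos_nonneg _

lemma gd_le_pi (x y : EuclideanSpace ℝ (Fin n)) : gd x y ≤ π := Real.arccos_le_pi _

lemma cos_gd {x y : EuclideanSpace ℝ (Fin n)} (hx : ‖x‖ = 1) (hy : ‖y‖ = 1) :
    Real.cos (gd x y) = inner ℝ x y :=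
  Real.cos_arccos (neg_one_le_inner hx hy) (inner_le_one hx hy)

lemma gd_self {x : EuclideanSpace ℝ (Fin n)} (hx : ‖x‖ = 1) : gd x x = 0 := by
  have : (inner ℝ x x : ℝ) = 1 := by
    rw [real_inner_self_eq_norm_sq, hx]; norm_num
  rw [gd, this, Real.arccos_one]

lemma arccos_le_arccos' {x y : ℝ} (h1 : -1 ≤ x) (hxy : x ≤ y) :
    Real.arccos y ≤ Real.arccos x := by
  rcases le_or_gt y 1 with hy | hy
  · exact (Real.strictAntiOn_arccos.antitoneOn ⟨h1, le_trans hxy hy⟩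
      ⟨le_trans h1 hxy, hy⟩ hxy)
  · rw [Real.arccos_of_one_le hy.le]
    exact Real.arccos_nonneg x

lemma sin_gd {x y : EuclideanSpace ℝ (Fin n)} (hx : ‖x‖ = 1) (hy : ‖y‖ = 1) :
    Real.sin (gd x y) = Real.sqrt (1 - (inner ℝ x y : ℝ)^2) := Real.sin_arccos _

/-- Triangle inequality for geodesic distance on the unit sphere. -/
lemma gd_triangle {x y z : EuclideanSpace ℝ (Fin n)}
    (hx : ‖x‖ = 1) (hy : ‖y‖ = 1) (hz : ‖z‖ = 1) :
    gd x z ≤ gd x y + gd y z := by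
  set a := gd x y with ha
  set b := gd y z with hb
  rcases le_or_gt π (a + b) with h | h
  · exact le_trans (gd_le_pi x z) h
  · -- show cos (a+b) ≤ ⟪x,z⟫
    set A : ℝ := inner ℝ x y with hA
    set B : ℝ := inner ℝ y z with hB
    have hcosa : Real.cos a = A := cos_gd hx hy
    have hcosb : Real.cos b = B := cos_gd hy hz
    have hsina : Real.sin a = Real.sqrt (1 - A^2) := sin_gd hx hy
    have hsinb : Real.sin b = Real.sqrt (1 - B^2) := sin_gd hy hz
    set x' : EuclideanSpace ℝ (Fin n) := x - A • y with hx'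
    set z' : EuclideanSpace ℝ (Fin n) := z - B • y with hz'
    have hyy : (inner ℝ y y : ℝ) = 1 := by
      rw [real_inner_self_eq_norm_sq, hy]; norm_num
    have hxx : (inner ℝ x x : ℝ) = 1 := by
      rw [real_inner_self_eq_norm_sq, hx]; norm_num
    have hzz : (inner ℝ z z : ℝ) = 1 := by
      rw [real_inner_self_eq_norm_sq, hz]; norm_num
    have hinner : (inner ℝ x' z' : ℝ) = (inner ℝ x z : ℝ) - A * B := by
      simp only [hx', hz', inner_sub_left, inner_sub_right, real_inner_smul_left,
        real_inner_smul_right, hyy]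
      simp only [hA, hB]
      ring_nf
      try simp [real_inner_comm]
      try simp [mul_comm]
      try ring
    have hnx' : ‖x'‖ = Real.sqrt (1 - A^2) := by
      have h2 : ‖x'‖^2 = 1 - A^2 := by
        rw [← real_inner_self_eq_norm_sq]
        simp only [hx', inner_sub_left, inner_sub_right, real_inner_smul_left,
          real_inner_smul_right, hyy, hxx]
        simp only [hA]
        ring_nf
        try simp [real_inner_comm]
        try simp [mul_comm]
        try ring
      rw [← h2]
      exact (Real.sqrt_sq (norm_nonneg _)).symm
    have hnz' : ‖z'‖ = Real.sqrt (1 - B^2) := by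
      have h2 : ‖z'‖^2 = 1 - B^2 := by
        rw [← real_inner_self_eq_norm_sq]
        simp only [hz', inner_sub_left, inner_sub_right, real_inner_smul_left,
          real_inner_smul_right, hyy, hzz]
        simp only [hB]
        ring_nf
        try simp [real_inner_comm]
        try simp [mul_comm]
        try ring
      rw [← h2]
      exact (Real.sqrt_sq (norm_nonneg _)).symm
    have hcs : -(‖x'‖ * ‖z'‖) ≤ (inner ℝ x' z' : ℝ) :=
      neg_le_of_abs_le (abs_real_inner_le_norm x' z')
    have hkey : Real.cos (a + b) ≤ (inner ℝ x z : ℝ) := by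
      rw [Real.cos_add, hcosa, hcosb, hsina, hsinb]
      have := hcs
      rw [hinner, hnx', hnz'] at this
      linarith
    calc gd x z = Real.arccos (inner ℝ x z) := rfl
      _ ≤ Real.arccos (Real.cos (a + b)) :=
          arccos_le_arccos' (Real.neg_one_le_cos _) hkey
      _ = a + b := Real.arccos_cos (add_nonneg (gd_nonneg x y) (gd_nonneg y z)) h.le

end Basics
section Mid

open Real

lemma gd_approx {n : ℕ} {x y x' y' : EuclideanSpace ℝ (Fin n)}
    (hx : ‖x‖ = 1) (hy : ‖y‖ = 1) (hx' : ‖x'‖ = 1) (hy' : ‖y'‖ = 1) :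
    |gd x' y' - gd x y| ≤ gd x x' + gd y y' := by
  rw [abs_le]
  constructor
  · have h1 : gd x y ≤ gd x x' + gd x' y := gd_triangle hx hx' hy
    have h2 : gd x' y ≤ gd x' y' + gd y' y := gd_triangle hx' hy' hy
    have h3 : gd y' y = gd y y' := gd_comm _ _
    linarith
  · have h1 : gd x' y' ≤ gd x' x + gd x y' := gd_triangle hx' hx hy'
    have h2 : gd x y' ≤ gd x y + gd y y' := gd_triangle hx hy hy'
    have h3 : gd x' x = gd x x' := gd_comm _ _
    linarith

lemma exists_finite_net (d : ℕ) {r : ℝ} (hr : 0 < r) :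
    ∃ X : Set (EuclideanSpace ℝ (Fin (d + 1))),
      X ⊆ unitSphere d ∧ X.Finite ∧ IsNet d r X := by
  have hcomp : IsCompact (unitSphere d) := isCompact_sphere 0 1
  set U : EuclideanSpace ℝ (Fin (d + 1)) → Set (EuclideanSpace ℝ (Fin (d + 1))) :=
    fun x => {y | gd x y < r} with hU
  have hUopen : ∀ x ∈ unitSphere d, IsOpen (U x) := by
    intro x _
    have hc : Continuous fun y : EuclideanSpace ℝ (Fin (d + 1)) => gd x y :=
      Real.continuous_arccos.comp (Continuous.inner continuous_const continuous_id)
    exact isOpen_lt hc continuous_const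
  have hcover : unitSphere d ⊆ ⋃ x ∈ unitSphere d, U x := by
    intro y hy
    have hy1 : ‖y‖ = 1 := unit_of_mem_sphere hy
    exact Set.mem_biUnion hy (by simpa [hU, gd_self hy1] using hr)
  obtain ⟨X, hXsub, hXfin, hXcover⟩ :=
    hcomp.elim_finite_subcover_image hUopen hcover
  refine ⟨X, hXsub, hXfin, ?_⟩
  intro y hy
  obtain ⟨x, hxX, hxy⟩ := Set.mem_iUnion₂.mp (hXcover hy)
  exact ⟨x, hxX, le_of_lt hxy⟩

lemma fin2_helper (a b c : Fin 2) (h1 : a ≠ b) (h2 : c ≠ b) : a = c := by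
  omega

end Mid
section Base
set_option maxHeartbeats 1000000

open Real

lemma base_case (α : ℝ) (hα0 : 0 < α) (hαπ : α ≤ π) (ε : ℝ) (hε0 : 0 < ε) (hεα : ε < α)
    (X : Set (EuclideanSpace ℝ (Fin 2))) (hXS : X ⊆ unitSphere 1)
    (hnet : IsNet 1 (ε / 4) X) :
    ¬ (distGraph X α ε).Colorable 2 := by
  rintro ⟨C⟩
  classical
  have hπ : (0:ℝ) < π := Real.pi_pos
  have h2π : (0:ℝ) < 2 * π := by linarith
  -- choose odd m and β = 2πw/m ∈ (α - ε/2, α]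
  set M : ℕ := ⌈4 * π / ε⌉₊ + ⌈2 * π / α⌉₊ + 1 with hM
  set m : ℕ := 2 * M + 1 with hm
  have hm_odd : Odd m := ⟨M, by omega⟩
  have hm_ge1 : (4 * π / ε : ℝ) < m := by
    have h1 : (4 * π / ε : ℝ) ≤ ⌈4 * π / ε⌉₊ := Nat.le_ceil _
    have h2 : (⌈4 * π / ε⌉₊ : ℝ) ≤ M := by
      have : (⌈4 * π / ε⌉₊ : ℕ) ≤ M := by omega
      exact_mod_cast this
    have h3 : (M : ℝ) < m := by
      have : M < m := by omega
      exact_mod_cast this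
    linarith
  have hm_ge2 : (2 * π / α : ℝ) ≤ m := by
    have h1 : (2 * π / α : ℝ) ≤ ⌈2 * π / α⌉₊ := Nat.le_ceil _
    have h2 : (⌈2 * π / α⌉₊ : ℝ) ≤ m := by
      have : (⌈2 * π / α⌉₊ : ℕ) ≤ m := by omega
      exact_mod_cast this
    linarith
  have hm_pos : (0:ℝ) < m := by
    have : 0 < m := by omega
    exact_mod_cast this
  set t : ℝ := (m : ℝ) * α / (2 * π) with ht
  have hmα : 2 * π ≤ (m:ℝ) * α := by
    have := mul_le_mul_of_nonneg_right hm_ge2 hα0.le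
    rwa [div_mul_cancel₀ _ hα0.ne'] at this
  have ht1 : 1 ≤ t := by
    rw [ht, le_div_iff₀ h2π]
    linarith
  set w : ℕ := ⌊t⌋₊ with hw
  have hw1 : 1 ≤ w := Nat.le_floor (by exact_mod_cast ht1)
  set β : ℝ := 2 * π * w / m with hβ
  have hβ_le : β ≤ α := by
    have h1 : (w : ℝ) ≤ t := Nat.floor_le (by linarith)
    rw [ht] at h1
    have h2 : (w:ℝ) * (2 * π) ≤ (m:ℝ) * α := by
      have := mul_le_mul_of_nonneg_right h1 h2π.le
      rwa [div_mul_cancel₀ _ h2π.ne'] at this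
    rw [hβ, div_le_iff₀ hm_pos]
    linarith
  have hβ_gt : α - ε / 2 < β := by
    have h1 : t < w + 1 := Nat.lt_floor_add_one t
    rw [ht] at h1
    have h2 : (m:ℝ) * α < ((w:ℝ) + 1) * (2 * π) := by
      have := mul_lt_mul_of_pos_right h1 h2π
      rwa [div_mul_cancel₀ _ h2π.ne'] at this
    have h3 : 2 * π < ε / 2 * m := by
      have := mul_lt_mul_of_pos_right hm_ge1 hε0
      rw [div_mul_cancel₀ _ hε0.ne'] at this
      nlinarith
    rw [hβ, lt_div_iff₀ hm_pos]
    nlinarith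
  have hβ_pos : 0 < β := by
    have : (0:ℝ) < w := by exact_mod_cast hw1
    rw [hβ]
    positivity
  have hβ_le_pi : β ≤ π := le_trans hβ_le hαπ
  have hmβ : (m : ℝ) * β = w * (2 * π) := by
    rw [hβ]
    field_simp
  -- the walk
  set z : ℕ → EuclideanSpace ℝ (Fin 2) :=
    fun k => !₂[Real.cos (k * β), Real.sin (k * β)] with hz
  have hz_unit : ∀ k, ‖z k‖ = 1 := by
    intro k
    have h1 : Real.sqrt (Real.cos ((k:ℝ) * β) ^ 2 + Real.sin ((k:ℝ) * β) ^ 2) = 1 := by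
      rw [Real.cos_sq_add_sin_sq]
      exact Real.sqrt_one
    rw [hz]
    simpa [EuclideanSpace.norm_eq, Fin.sum_univ_two, sq_abs] using h1
  have hz_mem : ∀ k, z k ∈ unitSphere 1 := by
    intro k
    simp [unitSphere, mem_sphere_zero_iff_norm, hz_unit k]
  have hz_inner : ∀ k l : ℕ, (inner ℝ (z k) (z l) : ℝ) = Real.cos ((k:ℝ) * β - l * β) := by
    intro k l
    rw [hz]
    simp only [PiLp.inner_apply, RCLike.inner_apply, starRingEnd_apply, star_trivial,
      Fin.sum_univ_two]
    simp only [Matrix.cons_val_zero, Matrix.cons_val_one, Matrix.head_cons]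
    rw [Real.cos_sub]
    try ring
  have hz_gd : ∀ k : ℕ, gd (z k) (z (k+1)) = β := by
    intro k
    rw [gd, hz_inner]
    have : (k:ℝ) * β - (k+1 : ℕ) * β = -β := by push_cast; ring
    rw [this, Real.cos_neg, Real.arccos_cos hβ_pos.le hβ_le_pi]
  have hz_per : z m = z 0 := by
    have hcm : Real.cos ((m:ℝ) * β) = 1 := by
      rw [hmβ, show (w:ℝ) * (2*π) = 0 + (w:ℤ) * (2*π) by push_cast; ring,
        Real.cos_add_int_mul_two_pi, Real.cos_zero]
    have hsm : Real.sin ((m:ℝ) * β) = 0 := by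
      rw [hmβ, show (w:ℝ) * (2*π) = 0 + (w:ℤ) * (2*π) by push_cast; ring,
        Real.sin_add_int_mul_two_pi, Real.sin_zero]
    rw [hz]
    ext i
    fin_cases i <;> simp [hcm, hsm]
  -- snap to net
  have hXne : Nonempty ↥X := by
    obtain ⟨x, hx, -⟩ := hnet (z 0) (hz_mem 0)
    exact ⟨⟨x, hx⟩⟩
  set pick : EuclideanSpace ℝ (Fin 2) → ↥X := fun y =>
    if h : ∃ x : ↥X, gd x.1 y ≤ ε / 4 then h.choose else Classical.arbitrary _ with hpick_def
  have hpick : ∀ y ∈ unitSphere 1, gd (pick y).1 y ≤ ε / 4 := by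
    intro y hy
    obtain ⟨x, hx, hgd⟩ := hnet y hy
    have h : ∃ x : ↥X, gd x.1 y ≤ ε / 4 := ⟨⟨x, hx⟩, hgd⟩
    rw [hpick_def]
    simp only [dif_pos h]
    exact h.choose_spec
  set F : ℕ → ↥X := fun k => pick (z k) with hF
  have hF_unit : ∀ k, ‖(F k).1‖ = 1 := fun k => unit_of_mem_sphere (hXS (F k).2)
  have hF_close : ∀ k, gd (F k).1 (z k) ≤ ε / 4 := fun k => hpick (z k) (hz_mem k)
  have hadj : ∀ k : ℕ, (distGraph X α ε).Adj (F k) (F (k+1)) := by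
    intro k
    have happ : |gd (F k).1 (F (k+1)).1 - gd (z k) (z (k+1))| ≤
        gd (z k) (F k).1 + gd (z (k+1)) (F (k+1)).1 :=
      gd_approx (hz_unit k) (hz_unit (k+1)) (hF_unit k) (hF_unit (k+1))
    rw [hz_gd k] at happ
    have h1 : gd (z k) (F k).1 ≤ ε / 4 := by rw [gd_comm]; exact hF_close k
    have h2 : gd (z (k+1)) (F (k+1)).1 ≤ ε / 4 := by rw [gd_comm]; exact hF_close (k+1)
    have hsum : gd (z k) (F k).1 + gd (z (k+1)) (F (k+1)).1 ≤ ε / 2 := by linarith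
    have habs := abs_le.mp (le_trans happ hsum)
    have hlow : α - ε ≤ gd (F k).1 (F (k+1)).1 := by linarith
    have hhigh : gd (F k).1 (F (k+1)).1 ≤ α + ε := by linarith
    have hne : F k ≠ F (k+1) := by
      intro heq
      have : gd (F k).1 (F (k+1)).1 = 0 := by rw [heq]; exact gd_self (hF_unit (k+1))
      rw [this] at hlow
      linarith
    exact ⟨hne, hlow, hhigh⟩
  have hparity : ∀ k : ℕ, (Even k → C (F k) = C (F 0)) ∧ (Odd k → C (F k) ≠ C (F 0)) := by
    intro k
    induction k with
    | zero => exact ⟨fun _ => rfl, fun h => absurd h (by simp)⟩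
    | succ k ih =>
      have hne : C (F k) ≠ C (F (k+1)) := C.valid (hadj k)
      constructor
      · intro hev
        have hodd : Odd k := by
          rw [Nat.even_add_one] at hev
          exact Nat.not_even_iff_odd.mp hev
        have h1 : C (F k) ≠ C (F 0) := ih.2 hodd
        exact fin2_helper _ _ _ (Ne.symm hne) (Ne.symm h1)
      · intro hodd
        have hev : Even k := by
          rw [Nat.odd_add_one] at hodd
          exact Nat.not_odd_iff_even.mp hodd
        have h1 : C (F k) = C (F 0) := ih.1 hev
        rw [← h1]
        exact Ne.symm hne
  have hFm : F m = F 0 := by rw [hF]; simp only [hz_per]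
  have := (hparity m).2 hm_odd
  rw [hFm] at this
  exact this rfl

end Base
section Step

set_option maxHeartbeats 1600000

open Real

lemma step_case (d : ℕ) (hd : 1 ≤ d)
    (IH : ∀ α : ℝ, 0 < α → α ≤ Real.arccos (-(1 / (d:ℝ))) → ∀ ε : ℝ, 0 < ε → ε < α →
      ∀ X : Set (EuclideanSpace ℝ (Fin (d + 1))), X ⊆ unitSphere d → X.Finite →
        IsNet d (ε / 4) X → ¬ (distGraph X α ε).Colorable (d + 1)) :
    ∀ α : ℝ, 0 < α → α ≤ Real.arccos (-(1 / ((d:ℝ) + 1))) → ∀ ε : ℝ, 0 < ε → ε < α →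
      ∀ X : Set (EuclideanSpace ℝ (Fin (d + 2))), X ⊆ unitSphere (d + 1) → X.Finite →
        IsNet (d + 1) (ε / 4) X → ¬ (distGraph X α ε).Colorable (d + 2) := by
  intro α hα0 hαℓ ε hε0 hεα X hXS hXfin hnet hcol
  obtain ⟨C⟩ := hcol
  classical
  have hd1 : (1:ℝ) ≤ (d:ℝ) := by exact_mod_cast hd
  have hd0 : (0:ℝ) < (d:ℝ) := by linarith
  -- basic bounds on cos α
  have hb1 : (-1:ℝ) ≤ -(1 / ((d:ℝ) + 1)) := by
    rw [neg_le_neg_iff]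
    rw [div_le_one (by linarith : (0:ℝ) < (d:ℝ) + 1)]
    linarith
  have hb2 : -(1 / ((d:ℝ) + 1)) ≤ 1 := by
    have : (0:ℝ) < 1 / ((d:ℝ) + 1) := by positivity
    linarith
  have hαπ : α ≤ π := le_trans hαℓ (Real.arccos_le_pi _)
  have hcosα_ge : -(1 / ((d:ℝ) + 1)) ≤ Real.cos α := by
    have h1 := Real.cos_le_cos_of_nonneg_of_le_pi hα0.le (Real.arccos_le_pi _) hαℓ
    rwa [Real.cos_arccos hb1 hb2] at h1
  have hcosα_lt1 : Real.cos α < 1 := by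
    have h1 := Real.cos_lt_cos_of_nonneg_of_le_pi (le_refl 0) hαπ hα0
    rwa [Real.cos_zero] at h1
  have hhalf : -(1/2 : ℝ) ≤ Real.cos α := by
    have : (1 / ((d:ℝ) + 1)) ≤ 1/2 := by
      rw [div_le_div_iff₀ (by linarith) (by norm_num)]
      linarith
    linarith
  have hαltπ : α < π := by
    rcases lt_or_eq_of_le hαπ with h | h
    · exact h
    · exfalso
      rw [h, Real.cos_pi] at hhalf
      linarith
  have hsinα : 0 < Real.sin α := Real.sin_pos_of_pos_of_lt_pi hα0 hαltπ
  set cα := Real.cos α with hcα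
  set sα := Real.sin α with hsα
  have h1c : (0:ℝ) < 1 + cα := by rw [hcα]; linarith
  -- the subsphere distance parameter
  set cθ : ℝ := cα / (1 + cα) with hcθ
  have hcθ_lt1 : cθ < 1 := by
    rw [hcθ, div_lt_one h1c]
    linarith
  have hcθ_ge : -(1 / (d:ℝ)) ≤ cθ := by
    rw [hcθ, le_div_iff₀ h1c]
    have h2 : (-1:ℝ) ≤ ((d:ℝ) + 1) * cα := by
      have := mul_le_mul_of_nonneg_left hcosα_ge (by linarith : (0:ℝ) ≤ (d:ℝ) + 1)
      rw [mul_neg, mul_one_div, div_self (by linarith : ((d:ℝ) + 1) ≠ 0)] at this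
      linarith
    have h3 : -(1 / (d:ℝ)) * (1 + cα) = (-(1 + cα)) / d := by ring
    rw [h3, div_le_iff₀ hd0]
    nlinarith
  have hcθ_b1 : (-1:ℝ) ≤ cθ := by
    have : (1 / (d:ℝ)) ≤ 1 := by
      rw [div_le_one hd0]; linarith
    linarith
  have hcθ_b2 : cθ ≤ 1 := hcθ_lt1.le
  set θs : ℝ := Real.arccos cθ with hθs
  have hθpos : 0 < θs := Real.arccos_pos.mpr hcθ_lt1
  have hθle : θs ≤ Real.arccos (-(1 / (d:ℝ))) := by
    apply arccos_le_arccos' _ hcθ_ge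
    have : (1 / (d:ℝ)) ≤ 1 := by rw [div_le_one hd0]; linarith
    linarith
  -- the distance transfer function
  set g : ℝ → ℝ := fun θ => Real.arccos (sα ^ 2 * Real.cos θ + cα ^ 2) with hg
  have hgθs : g θs = α := by
    rw [hg]
    have hcosθs : Real.cos θs = cθ := Real.cos_arccos hcθ_b1 hcθ_b2
    simp only []
    rw [hcosθs]
    have key : sα ^ 2 * cθ + cα ^ 2 = cα := by
      have hs2 : sα ^ 2 = 1 - cα ^ 2 := by
        rw [hsα, hcα, Real.sin_sq]
      rw [hs2, hcθ]
      field_simp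
      ring
    rw [key, hcα, Real.arccos_cos hα0.le hαπ]
  have hg_cont : ContinuousAt g θs := by
    apply Continuous.continuousAt
    exact Real.continuous_arccos.comp (by continuity)
  obtain ⟨δ, hδ0, hδ⟩ := Metric.continuousAt_iff.mp hg_cont (ε / 2) (by linarith)
  set ε' : ℝ := min (δ / 2) (θs / 2) with hε'
  have hε'0 : 0 < ε' := by
    apply lt_min
    · linarith
    · linarith
  have hε'θ : ε' < θs := lt_of_le_of_lt (min_le_right _ _) (by linarith)
  have hgclose : ∀ θ : ℝ, |θ - θs| ≤ ε' → |g θ - α| < ε / 2 := by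
    intro θ hθ
    have h1 : dist θ θs < δ := by
      rw [Real.dist_eq]
      have : ε' ≤ δ / 2 := min_le_left _ _
      linarith
    have := hδ h1
    rwa [Real.dist_eq, hgθs] at this
  -- ambient point p and isometric embedding of S^d
  have hy0 : EuclideanSpace.single (0 : Fin (d+2)) (1:ℝ) ∈ unitSphere (d+1) := by
    simp [unitSphere, mem_sphere_zero_iff_norm, EuclideanSpace.norm_single]
  obtain ⟨p, hpX, -⟩ := hnet _ hy0
  have hp_unit : ‖p‖ = 1 := unit_of_mem_sphere (hXS hpX)
  have hp0 : p ≠ 0 := by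
    intro h
    rw [h, norm_zero] at hp_unit
    norm_num at hp_unit
  haveI : Fact (Module.finrank ℝ (EuclideanSpace ℝ (Fin (d+2))) = (d+1) + 1) :=
    ⟨by simp [finrank_euclideanSpace]⟩
  set B := OrthonormalBasis.fromOrthogonalSpanSingleton (𝕜 := ℝ) (d+1) hp0 with hB
  set f : EuclideanSpace ℝ (Fin (d+1)) → EuclideanSpace ℝ (Fin (d+2)) :=
    fun u => ((B.repr.symm u : (ℝ ∙ p)ᗮ) : EuclideanSpace ℝ (Fin (d+2))) with hf
  have hf_inner : ∀ u v, (inner ℝ (f u) (f v) : ℝ) = inner ℝ u v := by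
    intro u v
    rw [hf]
    rw [← Submodule.coe_inner]
    exact B.repr.symm.inner_map_map u v
  have hf_orth : ∀ u, (inner ℝ p (f u) : ℝ) = 0 := by
    intro u
    have hmem : (B.repr.symm u : (ℝ ∙ p)ᗮ).1 ∈ (ℝ ∙ p)ᗮ := (B.repr.symm u).2
    exact (Submodule.mem_orthogonal _ _).mp hmem p (Submodule.mem_span_singleton_self p)
  set Φ : EuclideanSpace ℝ (Fin (d+1)) → EuclideanSpace ℝ (Fin (d+2)) :=
    fun u => sα • f u + cα • p with hΦ
  have hpp : (inner ℝ p p : ℝ) = 1 := by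
    rw [real_inner_self_eq_norm_sq, hp_unit]; norm_num
  have hf_orth' : ∀ u, (inner ℝ (f u) p : ℝ) = 0 := by
    intro u
    rw [real_inner_comm]
    exact hf_orth u
  have hΦ_inner : ∀ u v, (inner ℝ (Φ u) (Φ v) : ℝ) = sα ^ 2 * inner ℝ u v + cα ^ 2 := by
    intro u v
    rw [hΦ]
    simp only [inner_add_left, inner_add_right, real_inner_smul_left, real_inner_smul_right,
      hf_inner, hf_orth, hf_orth', hpp]
    ring
  have hΦ_unit : ∀ u : EuclideanSpace ℝ (Fin (d+1)), ‖u‖ = 1 → ‖Φ u‖ = 1 := by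
    intro u hu
    have h1 : (inner ℝ (Φ u) (Φ u) : ℝ) = 1 := by
      rw [hΦ_inner]
      have : (inner ℝ u u : ℝ) = 1 := by
        rw [real_inner_self_eq_norm_sq, hu]; norm_num
      rw [this, hsα, hcα]
      rw [mul_one, Real.sin_sq_add_cos_sq]
    have h2 : ‖Φ u‖ ^ 2 = 1 := by
      rw [← real_inner_self_eq_norm_sq, h1]
    nlinarith [norm_nonneg (Φ u)]
  have hΦ_mem : ∀ u : EuclideanSpace ℝ (Fin (d+1)), ‖u‖ = 1 → Φ u ∈ unitSphere (d+1) := by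
    intro u hu
    simp [unitSphere, mem_sphere_zero_iff_norm, hΦ_unit u hu]
  have hΦ_gd_p : ∀ u : EuclideanSpace ℝ (Fin (d+1)), ‖u‖ = 1 → gd p (Φ u) = α := by
    intro u hu
    have h1 : (inner ℝ p (Φ u) : ℝ) = cα := by
      rw [hΦ]
      simp only [inner_add_right, real_inner_smul_right]
      rw [hf_orth, hpp]
      ring
    rw [gd, h1, hcα, Real.arccos_cos hα0.le hαπ]
  have hΦ_gd : ∀ u v : EuclideanSpace ℝ (Fin (d+1)), ‖u‖ = 1 → ‖v‖ = 1 →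
      gd (Φ u) (Φ v) = g (gd u v) := by
    intro u v hu hv
    rw [gd, hΦ_inner, hg]
    have : (inner ℝ u v : ℝ) = Real.cos (gd u v) := (cos_gd hu hv).symm
    rw [this]
  -- the net on S^d and its induced coloring
  obtain ⟨X', hX'S, hX'fin, hX'net⟩ := exists_finite_net d (by positivity : (0:ℝ) < ε' / 4)
  have hXne : Nonempty ↥X := ⟨⟨p, hpX⟩⟩
  set pick : EuclideanSpace ℝ (Fin (d+2)) → ↥X := fun y =>
    if h : ∃ x : ↥X, gd x.1 y ≤ ε / 4 then h.choose else Classical.arbitrary _ with hpick_def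
  have hpick : ∀ y ∈ unitSphere (d+1), gd (pick y).1 y ≤ ε / 4 := by
    intro y hy
    obtain ⟨x, hx, hgd⟩ := hnet y hy
    have h : ∃ x : ↥X, gd x.1 y ≤ ε / 4 := ⟨⟨x, hx⟩, hgd⟩
    rw [hpick_def]
    simp only [dif_pos h]
    exact h.choose_spec
  have hX'unit : ∀ u : ↥X', ‖u.1‖ = 1 := fun u => unit_of_mem_sphere (hX'S u.2)
  set FF : ↥X' → ↥X := fun u => pick (Φ u.1) with hFF
  have hFF_unit : ∀ u, ‖(FF u).1‖ = 1 := fun u => unit_of_mem_sphere (hXS (FF u).2)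
  have hFF_close : ∀ u : ↥X', gd (FF u).1 (Φ u.1) ≤ ε / 4 := fun u =>
    hpick _ (hΦ_mem u.1 (hX'unit u))
  have hp_vertex : (⟨p, hpX⟩ : ↥X) ∈ Set.univ := Set.mem_univ _
  have hFF_color : ∀ u : ↥X', C (FF u) ≠ C ⟨p, hpX⟩ := by
    intro u
    have happ : |gd p (FF u).1 - gd p (Φ u.1)| ≤ gd p p + gd (Φ u.1) (FF u).1 :=
      gd_approx hp_unit (hΦ_unit u.1 (hX'unit u)) hp_unit (hFF_unit u)
    rw [gd_self hp_unit, hΦ_gd_p u.1 (hX'unit u)] at happ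
    have h2 : gd (Φ u.1) (FF u).1 ≤ ε / 4 := by rw [gd_comm]; exact hFF_close u
    have habs := abs_le.mp (le_trans happ (by linarith : (0:ℝ) + gd (Φ u.1) (FF u).1 ≤ ε / 4))
    have hlow : α - ε ≤ gd p (FF u).1 := by linarith
    have hhigh : gd p (FF u).1 ≤ α + ε := by linarith
    have hne : (⟨p, hpX⟩ : ↥X) ≠ FF u := by
      intro heq
      have h0 : gd p (FF u).1 = 0 := by
        have : p = (FF u).1 := congrArg Subtype.val heq
        rw [← this]; exact gd_self hp_unit
      rw [h0] at hlow
      linarith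
    have hadj : (distGraph X α ε).Adj ⟨p, hpX⟩ (FF u) := ⟨hne, hlow, hhigh⟩
    exact (C.valid hadj).symm
  -- build the (d+1)-coloring of X'
  set i0 : Fin (d+2) := C ⟨p, hpX⟩ with hi0
  have hsome : ∀ u : ↥X', ∃ a : Fin (d+1), finSuccEquiv' i0 (C (FF u)) = some a := by
    intro u
    rcases h : finSuccEquiv' i0 (C (FF u)) with _ | a
    · exfalso
      apply hFF_color u
      have h2 : finSuccEquiv' i0 i0 = none := finSuccEquiv'_at i0
      exact (finSuccEquiv' i0).injective (h.trans h2.symm)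
    · exact ⟨a, rfl⟩
  set c' : ↥X' → Fin (d+1) := fun u => ((finSuccEquiv' i0) (C (FF u))).getD ⟨0, Nat.succ_pos d⟩
    with hc'
  have hc'_valid : ∀ u v : ↥X', (distGraph X' θs ε').Adj u v → c' u ≠ c' v := by
    intro u v hadj
    obtain ⟨huv, hlo, hhi⟩ := hadj
    -- distances
    have hθ : |gd u.1 v.1 - θs| ≤ ε' := abs_le.mpr ⟨by linarith, by linarith⟩
    have hgd1 : gd (Φ u.1) (Φ v.1) = g (gd u.1 v.1) := hΦ_gd _ _ (hX'unit u) (hX'unit v)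
    have hgd2 : |g (gd u.1 v.1) - α| < ε / 2 := hgclose _ hθ
    have happ : |gd (FF u).1 (FF v).1 - gd (Φ u.1) (Φ v.1)| ≤
        gd (Φ u.1) (FF u).1 + gd (Φ v.1) (FF v).1 :=
      gd_approx (hΦ_unit _ (hX'unit u)) (hΦ_unit _ (hX'unit v)) (hFF_unit u) (hFF_unit v)
    have h1 : gd (Φ u.1) (FF u).1 ≤ ε / 4 := by rw [gd_comm]; exact hFF_close u
    have h2 : gd (Φ v.1) (FF v).1 ≤ ε / 4 := by rw [gd_comm]; exact hFF_close v
    have hsum : gd (Φ u.1) (FF u).1 + gd (Φ v.1) (FF v).1 ≤ ε / 2 := by linarith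
    have habs := abs_le.mp (le_trans happ hsum)
    rw [hgd1] at habs
    have habs2 := abs_le.mp hgd2.le
    have hlow : α - ε ≤ gd (FF u).1 (FF v).1 := by linarith
    have hhigh : gd (FF u).1 (FF v).1 ≤ α + ε := by linarith
    have hne : FF u ≠ FF v := by
      intro heq
      have h0 : gd (FF u).1 (FF v).1 = 0 := by rw [heq]; exact gd_self (hFF_unit v)
      rw [h0] at hlow
      linarith
    have hadjX : (distGraph X α ε).Adj (FF u) (FF v) := ⟨hne, hlow, hhigh⟩
    have hCne : C (FF u) ≠ C (FF v) := C.valid hadjX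
    obtain ⟨a, ha⟩ := hsome u
    obtain ⟨b, hb⟩ := hsome v
    rw [hc']
    simp only [ha, hb, Option.getD_some]
    intro hab
    apply hCne
    apply (finSuccEquiv' i0).injective
    rw [ha, hb, hab]
  have : (distGraph X' θs ε').Colorable (d + 1) :=
    ⟨SimpleGraph.Coloring.mk c' (fun {u v} h => hc'_valid u v h)⟩
  exact IH θs hθpos hθle ε' hε'0 hε'θ X' hX'S hX'fin hX'net this

end Step
section Final

open Real

lemma key_lemma (d : ℕ) (hd : 1 ≤ d) :
    ∀ α : ℝ, 0 < α → α ≤ Real.arccos (-(1 / (d:ℝ))) → ∀ ε : ℝ, 0 < ε → ε < α →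
      ∀ X : Set (EuclideanSpace ℝ (Fin (d + 1))), X ⊆ unitSphere d → X.Finite →
        IsNet d (ε / 4) X → ¬ (distGraph X α ε).Colorable (d + 1) := by
  induction d, hd using Nat.le_induction with
  | base =>
    intro α hα0 hαℓ ε hε0 hεα X hXS hXfin hnet
    have hαπ : α ≤ π := by
      have h1 : Real.arccos (-(1 / ((1:ℕ):ℝ))) = π := by
        norm_num [Real.arccos_neg_one]
      rwa [h1] at hαℓ
    exact base_case α hα0 hαπ ε hε0 hεα X hXS hnet
  | succ d hd IH =>
    have hstep := step_case d hd IH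
    intro α hα0 hαℓ ε hε0 hεα X hXS hXfin hnet
    have hcast : ((d + 1 : ℕ) : ℝ) = (d:ℝ) + 1 := by push_cast; ring
    rw [hcast] at hαℓ
    exact hstep α hα0 hαℓ ε hε0 hεα X hXS hXfin hnet

end Final

/-- with `ℓ_{d-1} = arccos(-1/d)`, for `0 < α ≤ ℓ_{d-1}` one has
`χ(D_{X,ε}(α)) ≥ d + 2` for every finite `(ε/4)`-net `X` of `S^d`. -/
theorem stmt_4 (d : ℕ) (hd : 1 ≤ d) (α : ℝ) (hα0 : 0 < α)
    (hαℓ : α ≤ Real.arccos (-(1 / d)))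
    (ε : ℝ) (hε0 : 0 < ε) (hεα : ε < α)
    (X : Set (EuclideanSpace ℝ (Fin (d + 1)))) (hXS : X ⊆ unitSphere d)
    (hXfin : X.Finite) (hnet : IsNet d (ε / 4) X) :
    (d + 2 : ℕ) ≤ (distGraph X α ε).chromaticNumber := by
  have hkey := key_lemma d hd α hα0 hαℓ ε hε0 hεα X hXS hXfin hnet
  rcases le_or_gt (distGraph X α ε).chromaticNumber ((d + 1 : ℕ) : ℕ∞) with h | h
  · exact absurd (SimpleGraph.chromaticNumber_le_iff_colorable.mp h) hkey
  · have h2 : ((d + 1 : ℕ) : ℕ∞) + 1 ≤ (distGraph X α ε).chromaticNumber :=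
      Order.add_one_le_of_lt h
    calc ((d + 2 : ℕ) : ℕ∞) = ((d + 1 : ℕ) : ℕ∞) + 1 := by push_cast; ring
      _ ≤ _ := h2
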